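/- Let N be a positive integer and let w : ZMod N → ℂ be a nonzero function with ‖w‖₂ = 1 satisfying |supp w| · |supp 𝓕 w| = N. Define the autocorrelation g : ZMod N → ℂ by g(x) = ∑_y w(y) · conj(w(y − x)). Then for every x: |g(x)|² = |supp w| · ∑_y |w(y)|² · |w(y − x)|², and |g(x)| ∈ {0, 1}. (This is Theorem 3.10 of the paper — for an extremal bi-partial isometry w, (w∗R(w)*)(w*∗R(w)) = ‖w‖₂² (ww*)∗(R(w)*R(w)) and w∗R(w)* is ‖w‖₂² times a partial isometry — specialized to L^∞(ℤ/Nℤ).) -/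

import Mathlib

open Complex Finset

noncomputable def dft (N : ℕ) [NeZero N] (f : ZMod N → ℂ) : ZMod N → ℂ :=
  fun k => (((N : ℝ) ^ (-(1/2 : ℝ)) : ℝ) : ℂ) *
    ∑ x : ZMod N, f x *
      Complex.exp (-2 * Real.pi * Complex.I * (k.val : ℂ) * (x.val : ℂ) / (N : ℂ))

noncomputable def l2norm (N : ℕ) [NeZero N] (f : ZMod N → ℂ) : ℝ :=
  Real.sqrt (∑ x : ZMod N, ‖f x‖ ^ 2)

noncomputable def ee (N : ℕ) [NeZero N] : AddChar (ZMod N) ℂ := ZMod.stdAddChar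

variable {N : ℕ} [NeZero N]

lemma ee_conj (a : ZMod N) : (starRingEnd ℂ) (ee N a) = ee N (-a) := by
  simp [ee, ZMod.stdAddChar_apply, AddChar.map_neg_eq_inv, ← Circle.coe_inv_eq_conj]

lemma ee_abs (a : ZMod N) : ‖ee N a‖ = 1 := by
  simp [ee, ZMod.stdAddChar_apply, Circle.norm_coe]

lemma ee_normSq (a : ZMod N) : Complex.normSq (ee N a) = 1 := by
  rw [← Complex.sq_norm, ee_abs]; norm_num

lemma ee_orth (b : ZMod N) : ∑ x : ZMod N, ee N (x * b) = if b = 0 then (N:ℂ) else 0 := by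
  have := AddChar.sum_mulShift b (ZMod.isPrimitive_stdAddChar N)
  simpa [ee, ZMod.card] using this

lemma ee_mul_ee (a b : ZMod N) : ee N a * ee N b = ee N (a + b) :=
  (AddChar.map_add_eq_mul _ a b).symm

lemma ee_exp (k x : ZMod N) :
    Complex.exp (-2 * Real.pi * Complex.I * (k.val : ℂ) * (x.val : ℂ) / (N : ℂ))
      = ee N (-(k * x)) := by
  have h : (-(k * x) : ZMod N) = ((-(k.val * x.val : ℤ) : ℤ) : ZMod N) := by
    push_cast [ZMod.natCast_val]
    simp [ZMod.natCast_val, ZMod.cast_id]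
  rw [ee, h, ZMod.stdAddChar_coe]
  congr 1
  push_cast
  ring

lemma workhorse (f g : ZMod N → ℂ) :
    ∑ k : ZMod N, (∑ x : ZMod N, f x * ee N (k * x)) * (∑ y : ZMod N, g y * ee N (-(k * y)))
      = N * ∑ x : ZMod N, f x * g x := by
  have h1 : ∀ k : ZMod N,
      (∑ x : ZMod N, f x * ee N (k * x)) * (∑ y : ZMod N, g y * ee N (-(k * y)))
        = ∑ x : ZMod N, ∑ y : ZMod N, f x * g y * ee N (k * (x - y)) := by
    intro k
    rw [Finset.sum_mul_sum]
    refine Finset.sum_congr rfl fun x _ => Finset.sum_congr rfl fun y _ => ?_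
    rw [mul_mul_mul_comm, ee_mul_ee]
    congr 2
    ring
  simp_rw [h1]
  have h3 : ∑ k : ZMod N, ∑ x : ZMod N, ∑ y : ZMod N, f x * g y * ee N (k * (x - y))
      = ∑ x : ZMod N, ∑ y : ZMod N, ∑ k : ZMod N, f x * g y * ee N (k * (x - y)) :=
    (Finset.sum_comm).trans (Finset.sum_congr rfl fun x _ => Finset.sum_comm)
  rw [h3]
  have h2 : ∀ x y : ZMod N, ∑ k : ZMod N, f x * g y * ee N (k * (x - y))
      = f x * g y * (if x - y = 0 then (N:ℂ) else 0) := by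
    intro x y
    rw [← Finset.mul_sum, ee_orth]
  simp_rw [h2]
  rw [Finset.mul_sum]
  refine Finset.sum_congr rfl fun x _ => ?_
  rw [Finset.sum_eq_single x]
  · simp [mul_comm, mul_assoc, mul_left_comm]
  · intro y _ hy
    rw [if_neg (by simpa [sub_eq_zero] using (Ne.symm hy)), mul_zero]
  · simp

lemma const_of_cs (A : Finset (ZMod N)) (u : ZMod N → ℂ)
    (h : (∑ x ∈ A, u x) * (starRingEnd ℂ) (∑ x ∈ A, u x)
        = (A.card : ℂ) * ∑ x ∈ A, u x * (starRingEnd ℂ) (u x)) :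
    ∀ x ∈ A, ∀ y ∈ A, u x = u y := by
  have t1 : ∑ x ∈ A, ∑ _y ∈ A, u x * (starRingEnd ℂ) (u x)
      = (A.card : ℂ) * ∑ x ∈ A, u x * (starRingEnd ℂ) (u x) := by
    simp_rw [Finset.sum_const, nsmul_eq_mul]
    rw [Finset.mul_sum]
  have t2 : ∑ _x ∈ A, ∑ y ∈ A, u y * (starRingEnd ℂ) (u y)
      = (A.card : ℂ) * ∑ x ∈ A, u x * (starRingEnd ℂ) (u x) := by
    rw [Finset.sum_const, nsmul_eq_mul]
  have t3 : ∑ x ∈ A, ∑ y ∈ A, u x * (starRingEnd ℂ) (u y)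
      = (∑ x ∈ A, u x) * (starRingEnd ℂ) (∑ x ∈ A, u x) := by
    simp_rw [← Finset.mul_sum]
    rw [← Finset.sum_mul, map_sum]
  have t4 : ∑ x ∈ A, ∑ y ∈ A, u y * (starRingEnd ℂ) (u x)
      = (∑ x ∈ A, u x) * (starRingEnd ℂ) (∑ x ∈ A, u x) := by
    simp_rw [← Finset.sum_mul]
    rw [← Finset.mul_sum, map_sum, mul_comm]
  have hc : ∑ x ∈ A, ∑ y ∈ A, (u x - u y) * (starRingEnd ℂ) (u x - u y) = 0 := by
    have e1 : ∀ x y : ZMod N, (u x - u y) * (starRingEnd ℂ) (u x - u y)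
        = u x * (starRingEnd ℂ) (u x) + u y * (starRingEnd ℂ) (u y)
          - u x * (starRingEnd ℂ) (u y) - u y * (starRingEnd ℂ) (u x) := by
      intro x y; rw [map_sub]; ring
    simp_rw [e1, Finset.sum_sub_distrib, Finset.sum_add_distrib]
    rw [t1, t2, t3, t4, h]
    ring
  have hr : ∑ x ∈ A, ∑ y ∈ A, Complex.normSq (u x - u y) = 0 := by
    have : ((∑ x ∈ A, ∑ y ∈ A, Complex.normSq (u x - u y) : ℝ) : ℂ) = 0 := by
      push_cast
      simp_rw [← Complex.mul_conj]
      exact hc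
    exact_mod_cast this
  intro x hx y hy
  have h1 := (Finset.sum_eq_zero_iff_of_nonneg (fun x _ => Finset.sum_nonneg
    (fun y _ => Complex.normSq_nonneg _))).mp hr x hx
  have h2 := (Finset.sum_eq_zero_iff_of_nonneg (fun y _ => Complex.normSq_nonneg _)).mp h1 y hy
  exact sub_eq_zero.mp (Complex.normSq_eq_zero.mp h2)

set_option maxHeartbeats 1000000 in
theorem autocorrelation_of_minimizer (N : ℕ) [NeZero N] (w : ZMod N → ℂ)
    (hw : w ≠ 0) (hw2 : l2norm N w = 1)
    (hmin : (Function.support w).ncard * (Function.support (dft N w)).ncard = N)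
    (x : ZMod N) :
    ‖∑ y : ZMod N, w y * (starRingEnd ℂ) (w (y - x))‖ ^ 2 =
        (Function.support w).ncard *
          ∑ y : ZMod N, ‖w y‖ ^ 2 * ‖w (y - x)‖ ^ 2 ∧
      (‖∑ y : ZMod N, w y * (starRingEnd ℂ) (w (y - x))‖ = 0 ∨
        ‖∑ y : ZMod N, w y * (starRingEnd ℂ) (w (y - x))‖ = 1) := by
  classical
  set F := dft N w with hFdef
  set A : Finset (ZMod N) := Finset.univ.filter (fun t => w t ≠ 0) with hAdef
  set B : Finset (ZMod N) := Finset.univ.filter (fun k => F k ≠ 0) with hBdef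
  have hsuppA : (Function.support w).ncard = A.card := by
    rw [show Function.support w = ↑A by ext t; simp [hAdef, Function.mem_support],
      Set.ncard_coe_finset]
  have hsuppB : (Function.support F).ncard = B.card := by
    rw [show Function.support F = ↑B by ext t; simp [hBdef, Function.mem_support],
      Set.ncard_coe_finset]
  set d := A.card with hddef
  set m := B.card with hmdef
  have hdm : d * m = N := by rw [hsuppA, hsuppB] at hmin; exact hmin
  have hN0 : 0 < N := Nat.pos_of_ne_zero (NeZero.ne N)
  have hd0 : 0 < d := by
    rcases Nat.eq_zero_or_pos d with h | h
    · exfalso; rw [h, zero_mul] at hdm; omega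
    · exact h
  have hm0 : 0 < m := by
    rcases Nat.eq_zero_or_pos m with h | h
    · exfalso; rw [h, mul_zero] at hdm; omega
    · exact h
  have hNR : (0:ℝ) < N := by exact_mod_cast hN0
  have hNne : (N:ℝ) ≠ 0 := ne_of_gt hNR
  have hdR : (0:ℝ) < d := by exact_mod_cast hd0
  have hdne : (d:ℝ) ≠ 0 := ne_of_gt hdR
  have hdmR : (d:ℝ) * m = N := by exact_mod_cast hdm
  have hwnA : ∀ t, t ∉ A → w t = 0 := by intro t ht; simpa [hAdef] using ht
  -- constant
  set cst : ℝ := (N:ℝ) ^ (-(1/2 : ℝ)) with hcstdef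
  have hcstpos : 0 < cst := Real.rpow_pos_of_pos hNR _
  have hcst2 : cst ^ 2 = (N:ℝ)⁻¹ := by
    rw [hcstdef, ← Real.rpow_natCast ((N:ℝ) ^ (-(1/2:ℝ))) 2, ← Real.rpow_mul (le_of_lt hNR)]
    norm_num [Real.rpow_neg_one]
  have hF : ∀ k, F k = (cst : ℂ) * ∑ t : ZMod N, w t * ee N (-(k * t)) := by
    intro k
    simp only [hFdef, dft]
    congr 1
    exact Finset.sum_congr rfl fun t _ => by rw [ee_exp]
  -- basic sums
  have hsumAR : ∀ (f : ZMod N → ℝ), (∀ t, t ∉ A → f t = 0) →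
      ∑ t ∈ A, f t = ∑ t : ZMod N, f t :=
    fun f hf => Finset.sum_subset (Finset.subset_univ A) (fun t _ ht => hf t ht)
  have hsumAC : ∀ (f : ZMod N → ℂ), (∀ t, t ∉ A → f t = 0) →
      ∑ t ∈ A, f t = ∑ t : ZMod N, f t :=
    fun f hf => Finset.sum_subset (Finset.subset_univ A) (fun t _ ht => hf t ht)
  have hsum1 : ∑ t : ZMod N, Complex.normSq (w t) = 1 := by
    have hnn : 0 ≤ ∑ t : ZMod N, ‖w t‖ ^ 2 :=
      Finset.sum_nonneg fun t _ => sq_nonneg _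
    have h1 := hw2
    rw [l2norm] at h1
    have h0 : ∑ t : ZMod N, ‖w t‖ ^ 2 = 1 := by
      nlinarith [Real.sq_sqrt hnn]
    simpa [Complex.sq_norm] using h0
  -- Parseval
  have hpars : ∑ k : ZMod N, Complex.normSq (F k) = 1 := by
    have hC : ∑ k : ZMod N, (F k * (starRingEnd ℂ) (F k))
        = (cst:ℂ) * (cst:ℂ) * ∑ k : ZMod N,
          (∑ t : ZMod N, (starRingEnd ℂ) (w t) * ee N (k * t)) *
            (∑ t : ZMod N, w t * ee N (-(k * t))) := by
      rw [Finset.mul_sum]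
      refine Finset.sum_congr rfl fun k _ => ?_
      rw [hF k, map_mul, map_sum, Complex.conj_ofReal]
      simp_rw [map_mul, ee_conj, neg_neg]
      ring
    rw [workhorse (fun t => (starRingEnd ℂ) (w t)) w] at hC
    have h2 : (cst:ℂ) * cst * (N:ℂ) = 1 := by
      have h2' : ((cst^2 * N : ℝ) : ℂ) = ((1:ℝ):ℂ) := by
        rw [hcst2, inv_mul_cancel₀ hNne]
      push_cast at h2'
      linear_combination h2'
    have hC2 : ∑ k : ZMod N, (F k * (starRingEnd ℂ) (F k))
        = ∑ t : ZMod N, w t * (starRingEnd ℂ) (w t) := by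
      rw [hC, ← mul_assoc, h2, one_mul]
      exact Finset.sum_congr rfl fun t _ => mul_comm _ _
    have hC3 : ∑ k : ZMod N, Complex.normSq (F k) = ∑ t : ZMod N, Complex.normSq (w t) := by
      have hcast : ((∑ k : ZMod N, Complex.normSq (F k) : ℝ) : ℂ)
          = ((∑ t : ZMod N, Complex.normSq (w t) : ℝ) : ℂ) := by
        push_cast
        simp_rw [← Complex.mul_conj]
        exact hC2
      exact_mod_cast hcast
    rw [hC3, hsum1]
  -- pointwise bound
  have hsumA2 : ∑ t ∈ A, ‖w t‖ ^ 2 = 1 := by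
    rw [hsumAR _ (fun t ht => by rw [hwnA t ht]; simp)]
    rw [← hsum1]; exact Finset.sum_congr rfl fun t _ => Complex.sq_norm _
  have habsF : ∀ k, Complex.normSq (F k) ≤ (d:ℝ) * (N:ℝ)⁻¹ := by
    intro k
    have h1 : ‖F k‖ ≤ cst * ∑ t ∈ A, ‖w t‖ := by
      rw [hF k, norm_mul, Complex.norm_real, Real.norm_of_nonneg (le_of_lt hcstpos)]
      refine mul_le_mul_of_nonneg_left ?_ (le_of_lt hcstpos)
      calc ‖∑ t : ZMod N, w t * ee N (-(k * t))‖
          ≤ ∑ t : ZMod N, ‖w t * ee N (-(k * t))‖ :=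
            norm_sum_le _ _
        _ = ∑ t : ZMod N, ‖w t‖ := by simp_rw [norm_mul, ee_abs, mul_one]
        _ = ∑ t ∈ A, ‖w t‖ :=
            (hsumAR _ (fun t ht => by rw [hwnA t ht]; simp)).symm
    have h3 : (∑ t ∈ A, ‖w t‖)^2 ≤ (d:ℝ) := by
      calc (∑ t ∈ A, ‖w t‖)^2 ≤ A.card * ∑ t ∈ A, (‖w t‖)^2 :=
          sq_sum_le_card_mul_sum_sq
        _ = (d:ℝ) := by rw [hsumA2, mul_one]
    calc Complex.normSq (F k) = (‖F k‖)^2 := (Complex.sq_norm _).symm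
      _ ≤ (cst * ∑ t ∈ A, ‖w t‖)^2 :=
          pow_le_pow_left₀ (norm_nonneg _) h1 2
      _ = cst^2 * (∑ t ∈ A, ‖w t‖)^2 := by ring
      _ ≤ cst^2 * d := mul_le_mul_of_nonneg_left h3 (sq_nonneg _)
      _ = (d:ℝ) * (N:ℝ)⁻¹ := by rw [hcst2]; ring
  have hsumB : ∑ k ∈ B, Complex.normSq (F k) = 1 := by
    rw [← hpars]
    refine Finset.sum_subset (Finset.subset_univ B) (fun k _ hk => ?_)
    have hk0 : F k = 0 := by simpa [hBdef] using hk
    rw [hk0]; simp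
  have hFonB : ∀ k ∈ B, Complex.normSq (F k) = (d:ℝ) * (N:ℝ)⁻¹ := by
    have hzero : ∑ k ∈ B, ((d:ℝ) * (N:ℝ)⁻¹ - Complex.normSq (F k)) = 0 := by
      rw [Finset.sum_sub_distrib, hsumB, Finset.sum_const, nsmul_eq_mul]
      have hm1 : (m:ℝ) * ((d:ℝ) * (N:ℝ)⁻¹) = 1 := by
        field_simp
        linarith [hdmR]
      linarith [hm1]
    intro k hk
    have h := (Finset.sum_eq_zero_iff_of_nonneg (fun k _ => sub_nonneg.mpr (habsF k))).mp hzero k hk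
    linarith [h]
  -- flatness
  obtain ⟨k₀, hk₀⟩ := Finset.card_pos.mp hm0
  obtain ⟨a₀, ha₀⟩ := Finset.card_pos.mp hd0
  set u : ZMod N → ℂ := fun t => w t * ee N (-(k₀ * t)) with hudef
  have huA : ∀ t, t ∉ A → u t = 0 := fun t ht => by rw [hudef]; simp [hwnA t ht]
  have hnormSqu : ∀ t, Complex.normSq (u t) = Complex.normSq (w t) := fun t => by
    rw [hudef]; simp [Complex.normSq_mul, ee_normSq]
  have hFk₀ : F k₀ = (cst:ℂ) * ∑ t ∈ A, u t := by
    rw [hF k₀, hsumAC u huA]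
  have hnormSqsum : Complex.normSq (∑ t ∈ A, u t) = (d:ℝ) := by
    have h1 : Complex.normSq (F k₀) = cst^2 * Complex.normSq (∑ t ∈ A, u t) := by
      rw [hFk₀, Complex.normSq_mul, Complex.normSq_ofReal]; ring
    have h2 := hFonB k₀ hk₀
    rw [h1, hcst2] at h2
    have := mul_left_cancel₀ (inv_ne_zero hNne) (by linarith : (N:ℝ)⁻¹ * Complex.normSq (∑ t ∈ A, u t) = (N:ℝ)⁻¹ * d)
    exact this
  have hsumu1 : ∑ t ∈ A, u t * (starRingEnd ℂ) (u t) = 1 := by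
    have : ∀ t ∈ A, u t * (starRingEnd ℂ) (u t) = ((Complex.normSq (w t) : ℝ) : ℂ) := by
      intro t _; rw [Complex.mul_conj, hnormSqu]
    rw [Finset.sum_congr rfl this]
    have hcast : ∑ t ∈ A, ((Complex.normSq (w t) : ℝ) : ℂ)
        = ((∑ t ∈ A, Complex.normSq (w t) : ℝ) : ℂ) := by push_cast; rfl
    rw [hcast, hsumAR _ (fun t ht => by rw [hwnA t ht]; simp), hsum1]
    norm_num
  have hcs : (∑ t ∈ A, u t) * (starRingEnd ℂ) (∑ t ∈ A, u t)
      = (A.card : ℂ) * ∑ t ∈ A, u t * (starRingEnd ℂ) (u t) := by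
    rw [Complex.mul_conj, hnormSqsum, hsumu1, mul_one]
    norm_num [hddef]
  have hconst := const_of_cs A u hcs
  set z₀ : ℂ := u a₀ with hz₀def
  have hwA : ∀ t ∈ A, w t = z₀ * ee N (k₀ * t) := by
    intro t ht
    have h := hconst t ht a₀ ha₀
    have h2 : u t * ee N (k₀ * t) = z₀ * ee N (k₀ * t) := by rw [h]
    rw [hudef] at h2
    simp only [mul_assoc, ee_mul_ee, neg_add_cancel, AddChar.map_zero_eq_one, mul_one] at h2
    exact h2
  have hnormz₀ : (d:ℝ) * Complex.normSq z₀ = 1 := by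
    have h1 : ∑ t ∈ A, Complex.normSq (w t) = 1 := by
      rw [hsumAR _ (fun t ht => by rw [hwnA t ht]; simp), hsum1]
    calc (d:ℝ) * Complex.normSq z₀ = ∑ _t ∈ A, Complex.normSq z₀ := by
          rw [Finset.sum_const, nsmul_eq_mul]
      _ = ∑ t ∈ A, Complex.normSq (w t) := by
          refine Finset.sum_congr rfl fun t ht => ?_
          have hcalc : Complex.normSq (w t) = Complex.normSq z₀ * Complex.normSq (ee N (k₀ * t)) := by
            rw [hwA t ht, Complex.normSq_mul]
          rw [hcalc, ee_normSq, mul_one]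
      _ = 1 := h1
  have hz : Complex.normSq z₀ = (d:ℝ)⁻¹ := by
    field_simp at hnormz₀ ⊢
    linarith [hnormz₀]
  have hz₀ne : z₀ ≠ 0 := by
    intro h
    rw [h, Complex.normSq_zero, mul_zero] at hnormz₀
    norm_num at hnormz₀
  clear_value z₀
  -- the Fourier transform of the indicator of A
  set T : ZMod N → ℂ := fun c => ∑ t ∈ A, ee N (c * t) with hTdef
  have hcstC : (cst:ℂ) ≠ 0 := Complex.ofReal_ne_zero.mpr (ne_of_gt hcstpos)
  have hFT : ∀ c : ZMod N, F (k₀ - c) = (cst:ℂ) * (z₀ * T c) := by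
    intro c
    have hstep : ∑ t : ZMod N, w t * ee N (-((k₀ - c) * t)) = z₀ * T c := by
      rw [← hsumAC (fun t => w t * ee N (-((k₀ - c) * t)))
        (fun t ht => by simp [hwnA t ht])]
      rw [Finset.mul_sum]
      refine Finset.sum_congr rfl fun t ht => ?_
      rw [hwA t ht, mul_assoc, ee_mul_ee]
      have harg : k₀ * t + -((k₀ - c) * t) = c * t := by ring
      rw [harg]
    rw [hF (k₀ - c), hstep]
  have hTdich : ∀ c : ZMod N, T c = 0 ∨ Complex.normSq (T c) = (d:ℝ)^2 := by
    intro c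
    by_cases hc : F (k₀ - c) = 0
    · left
      have h := hFT c
      rw [hc] at h
      have h' := (mul_eq_zero.mp h.symm).resolve_left hcstC
      exact (mul_eq_zero.mp h').resolve_left hz₀ne
    · right
      have hkB : (k₀ - c) ∈ B := by simp [hBdef, hc]
      have h2 := hFonB _ hkB
      have h3 : Complex.normSq (F (k₀ - c))
          = cst^2 * (Complex.normSq z₀ * Complex.normSq (T c)) := by
        rw [hFT c, Complex.normSq_mul, Complex.normSq_mul, Complex.normSq_ofReal]; ring
      rw [h3, hcst2, hz] at h2
      have h4 : Complex.normSq (T c) = (d:ℝ) * d := by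
        field_simp at h2
        nlinarith [h2]
      rw [h4]; ring
  have hT2 : ∑ c : ZMod N, Complex.normSq (T c) = (N:ℝ) * d := by
    set φ : ZMod N → ℂ := fun t => if t ∈ A then 1 else 0 with hφdef
    have hTc : ∀ c, T c = ∑ t : ZMod N, φ t * ee N (c * t) := by
      intro c
      symm
      simp only [hφdef, ite_mul, one_mul, zero_mul]
      rw [Finset.sum_ite_mem, Finset.univ_inter]
    have hTcconj : ∀ c, (starRingEnd ℂ) (T c) = ∑ t : ZMod N, φ t * ee N (-(c * t)) := by
      intro c
      rw [hTc c, map_sum]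
      refine Finset.sum_congr rfl fun t _ => ?_
      rw [map_mul, ee_conj]
      congr 1
      by_cases htA : t ∈ A <;> simp [hφdef, htA]
    have hC : ∑ c : ZMod N, (T c * (starRingEnd ℂ) (T c))
        = (N:ℂ) * ∑ t : ZMod N, φ t * φ t := by
      calc ∑ c : ZMod N, (T c * (starRingEnd ℂ) (T c))
          = ∑ c : ZMod N, (∑ t : ZMod N, φ t * ee N (c * t)) *
              (∑ t : ZMod N, φ t * ee N (-(c * t))) := by
            refine Finset.sum_congr rfl fun c _ => ?_
            rw [hTcconj c, hTc c]
        _ = (N:ℂ) * ∑ t : ZMod N, φ t * φ t := workhorse φ φ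
    have hφ2 : ∑ t : ZMod N, φ t * φ t = ((d:ℝ):ℂ) := by
      have h5 : ∀ t, φ t * φ t = if t ∈ A then (1:ℂ) else 0 := fun t => by
        by_cases htA : t ∈ A <;> simp [hφdef, htA]
      simp_rw [h5]
      rw [Finset.sum_ite_mem, Finset.univ_inter, Finset.sum_const, nsmul_eq_mul, mul_one]
      norm_cast
    have hfinal : ((∑ c : ZMod N, Complex.normSq (T c) : ℝ) : ℂ) = (((N:ℝ) * d : ℝ) : ℂ) := by
      push_cast
      simp_rw [← Complex.mul_conj]
      rw [hC, hφ2]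
      push_cast
      ring
    exact_mod_cast hfinal
  have hT4 : ∑ c : ZMod N, (Complex.normSq (T c))^2 = (N:ℝ) * (d:ℝ)^3 := by
    have h6 : ∀ c : ZMod N, (Complex.normSq (T c))^2 = (d:ℝ)^2 * Complex.normSq (T c) := by
      intro c
      rcases hTdich c with h | h
      · rw [h]; simp
      · rw [h]; ring
    simp_rw [h6]
    rw [← Finset.mul_sum, hT2]
    ring
  -- the autocorrelation counting function
  set ρ : ZMod N → ℝ := fun s => ∑ a ∈ A, (if a + s ∈ A then (1:ℝ) else 0) with hρdef
  have hρapp : ∀ s, ρ s = ∑ a ∈ A, (if a + s ∈ A then (1:ℝ) else 0) := fun s => by rw [hρdef]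
  have hρnn : ∀ s, 0 ≤ ρ s := fun s => by
    rw [hρapp]
    exact Finset.sum_nonneg fun a _ => by positivity
  have hρle : ∀ s, ρ s ≤ d := by
    intro s
    rw [hρapp]
    calc ∑ a ∈ A, (if a + s ∈ A then (1:ℝ) else 0) ≤ ∑ _a ∈ A, (1:ℝ) :=
        Finset.sum_le_sum fun a _ => by split <;> norm_num
      _ = d := by rw [Finset.sum_const, nsmul_eq_mul, mul_one]
  have hρsum : ∑ s : ZMod N, ρ s = (d:ℝ)^2 := by
    simp_rw [hρapp]
    rw [Finset.sum_comm]
    have h7 : ∀ a : ZMod N, ∑ s : ZMod N, (if a + s ∈ A then (1:ℝ) else 0) = d := by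
      intro a
      have he := Fintype.sum_equiv (Equiv.addLeft a) (fun s => if a + s ∈ A then (1:ℝ) else 0)
        (fun z => if z ∈ A then (1:ℝ) else 0) (fun s => rfl)
      rw [he, Finset.sum_ite_mem, Finset.univ_inter, Finset.sum_const, nsmul_eq_mul, mul_one]
    calc ∑ a ∈ A, ∑ s : ZMod N, (if a + s ∈ A then (1:ℝ) else 0) = ∑ _a ∈ A, (d:ℝ) :=
        Finset.sum_congr rfl (fun a _ => h7 a)
      _ = (d:ℝ)^2 := by rw [Finset.sum_const, nsmul_eq_mul]; ring
  -- inverse transform identity for ρ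
  have hNC : (N:ℂ) ≠ 0 := Nat.cast_ne_zero.mpr (NeZero.ne N)
  have hρhat : ∀ s : ZMod N, ∑ c : ZMod N, ((Complex.normSq (T c) : ℝ) : ℂ) * ee N (s * c)
      = (N:ℂ) * ((ρ s : ℝ):ℂ) := by
    intro s
    have e1 : ∀ c : ZMod N, ((Complex.normSq (T c) : ℝ) : ℂ) * ee N (s * c)
        = ∑ a ∈ A, ∑ b ∈ A, ee N (c * (a - b + s)) := by
      intro c
      have hTc' : T c = ∑ a ∈ A, ee N (c * a) := by rw [hTdef]
      have hTconj' : (starRingEnd ℂ) (T c) = ∑ b ∈ A, ee N (-(c * b)) := by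
        rw [hTc', map_sum]; exact Finset.sum_congr rfl fun b _ => ee_conj _
      rw [← Complex.mul_conj, hTconj', hTc', Finset.sum_mul_sum, Finset.sum_mul]
      refine Finset.sum_congr rfl fun a _ => ?_
      rw [Finset.sum_mul]
      refine Finset.sum_congr rfl fun b _ => ?_
      rw [ee_mul_ee, ee_mul_ee]
      have harg : c * a + -(c * b) + s * c = c * (a - b + s) := by ring
      rw [harg]
    simp_rw [e1]
    rw [Finset.sum_comm]
    have e2 : ∀ a : ZMod N, ∑ c : ZMod N, ∑ b ∈ A, ee N (c * (a - b + s))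
        = ∑ b ∈ A, ∑ c : ZMod N, ee N (c * (a - b + s)) := fun a => Finset.sum_comm
    calc ∑ a ∈ A, ∑ c : ZMod N, ∑ b ∈ A, ee N (c * (a - b + s))
        = ∑ a ∈ A, ∑ b ∈ A, ∑ c : ZMod N, ee N (c * (a - b + s)) :=
          Finset.sum_congr rfl fun a _ => e2 a
      _ = ∑ a ∈ A, ∑ b ∈ A, (if b = a + s then (N:ℂ) else 0) := by
          refine Finset.sum_congr rfl fun a _ => Finset.sum_congr rfl fun b _ => ?_
          rw [ee_orth]
          congr 1
          simp only [eq_iff_iff]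
          constructor <;> intro h <;> linear_combination -h
      _ = ∑ a ∈ A, (if a + s ∈ A then (N:ℂ) else 0) := by
          refine Finset.sum_congr rfl fun a _ => ?_
          exact Finset.sum_ite_eq' A (a + s) (fun _ => (N:ℂ))
      _ = (N:ℂ) * ((ρ s : ℝ):ℂ) := by
          have : ∀ a : ZMod N, (if a + s ∈ A then (N:ℂ) else 0)
              = (N:ℂ) * ((if a + s ∈ A then (1:ℝ) else 0 : ℝ) : ℂ) := by
            intro a; split <;> simp
          simp_rw [this]
          rw [← Finset.mul_sum]
          congr 1
          rw [hρapp]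
          push_cast
          rfl
  set f : ZMod N → ℂ := fun c => (((N:ℝ)⁻¹ * Complex.normSq (T c) : ℝ) : ℂ) with hfdef
  have hfapp : ∀ c, f c = (((N:ℝ)⁻¹ * Complex.normSq (T c) : ℝ) : ℂ) := fun c => by rw [hfdef]
  have hρf : ∀ s, ((ρ s : ℝ):ℂ) = ∑ c : ZMod N, f c * ee N (s * c) := by
    intro s
    apply mul_left_cancel₀ hNC
    rw [← hρhat s, Finset.mul_sum]
    refine Finset.sum_congr rfl fun c _ => ?_
    rw [hfapp c, ← mul_assoc]
    congr 1
    push_cast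
    field_simp
  have hρfconj : ∀ s, ((ρ s : ℝ):ℂ) = ∑ c : ZMod N, f c * ee N (-(s * c)) := by
    intro s
    have h9 := congrArg (starRingEnd ℂ) (hρf s)
    rw [Complex.conj_ofReal, map_sum] at h9
    rw [h9]
    refine Finset.sum_congr rfl fun c _ => ?_
    rw [map_mul, ee_conj]
    congr 1
    rw [hfapp c]
    exact Complex.conj_ofReal _
  have hρ2 : ∑ s : ZMod N, (ρ s)^2 = (d:ℝ)^3 := by
    have hC : ∑ s : ZMod N, ((ρ s:ℝ):ℂ) * ((ρ s:ℝ):ℂ) = (N:ℂ) * ∑ c : ZMod N, f c * f c := by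
      calc ∑ s : ZMod N, ((ρ s:ℝ):ℂ) * ((ρ s:ℝ):ℂ)
          = ∑ s : ZMod N, (∑ c : ZMod N, f c * ee N (s * c)) *
              (∑ c : ZMod N, f c * ee N (-(s * c))) := by
            refine Finset.sum_congr rfl fun s _ => ?_
            rw [← hρf, ← hρfconj]
        _ = (N:ℂ) * ∑ c : ZMod N, f c * f c := workhorse f f
    have hff : ∑ c : ZMod N, f c * f c = (((N:ℝ)⁻¹ * (d:ℝ)^3 : ℝ) : ℂ) := by
      have hterm : ∀ c : ZMod N, f c * f c
          = ((((N:ℝ)⁻¹)^2 * (Complex.normSq (T c))^2 : ℝ) : ℂ) := fun c => by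
        rw [hfapp c]; push_cast; ring
      have hr : ∑ c : ZMod N, ((N:ℝ)⁻¹)^2 * (Complex.normSq (T c))^2
          = (N:ℝ)⁻¹ * (d:ℝ)^3 := by
        rw [← Finset.mul_sum, hT4]
        field_simp
      calc ∑ c : ZMod N, f c * f c
          = ∑ c : ZMod N, ((((N:ℝ)⁻¹)^2 * (Complex.normSq (T c))^2 : ℝ) : ℂ) :=
            Finset.sum_congr rfl fun c _ => hterm c
        _ = ((∑ c : ZMod N, ((N:ℝ)⁻¹)^2 * (Complex.normSq (T c))^2 : ℝ) : ℂ) := by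
            push_cast; rfl
        _ = (((N:ℝ)⁻¹ * (d:ℝ)^3 : ℝ) : ℂ) := by rw [hr]
    have hcast : ((∑ s : ZMod N, (ρ s)^2 : ℝ):ℂ) = (((d:ℝ)^3 : ℝ):ℂ) := by
      push_cast
      have : ∀ s : ZMod N, ((ρ s : ℝ):ℂ)^2 = ((ρ s:ℝ):ℂ) * ((ρ s:ℝ):ℂ) := fun s => sq _
      simp_rw [this]
      rw [hC, hff]
      push_cast
      field_simp
    exact_mod_cast hcast
  have hρdich : ∀ s, ρ s = 0 ∨ ρ s = d := by
    have hzero : ∑ s : ZMod N, ρ s * ((d:ℝ) - ρ s) = 0 := by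
      have hterm : ∀ s : ZMod N, ρ s * ((d:ℝ) - ρ s) = (d:ℝ) * ρ s - (ρ s)^2 := fun s => by ring
      simp_rw [hterm]
      rw [Finset.sum_sub_distrib, ← Finset.mul_sum, hρsum, hρ2]
      ring
    intro s
    have h := (Finset.sum_eq_zero_iff_of_nonneg (fun s _ =>
      mul_nonneg (hρnn s) (sub_nonneg.mpr (hρle s)))).mp hzero s (Finset.mem_univ s)
    rcases mul_eq_zero.mp h with h | h
    · exact Or.inl h
    · exact Or.inr (by linarith [sub_eq_zero.mp h])
  -- conclusion
  have hwif : ∀ y, w y = if y ∈ A then z₀ * ee N (k₀ * y) else 0 := by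
    intro y
    by_cases hy : y ∈ A
    · rw [if_pos hy]; exact hwA y hy
    · rw [if_neg hy]; exact hwnA y hy
  have hcount : ∑ y : ZMod N, (if y ∈ A ∧ y - x ∈ A then (1:ℝ) else 0) = ρ (-x) := by
    rw [hρapp]
    have hterm : ∀ y : ZMod N, (if y ∈ A ∧ y - x ∈ A then (1:ℝ) else 0)
        = if y ∈ A then (if y + -x ∈ A then (1:ℝ) else 0) else 0 := by
      intro y
      by_cases h1 : y ∈ A <;> by_cases h2 : y - x ∈ A <;>
        simp [h1, h2, sub_eq_add_neg] at * <;> simp [h1, h2]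
    simp_rw [hterm]
    rw [Finset.sum_ite_mem, Finset.univ_inter]
  have hgval : ∑ y : ZMod N, w y * (starRingEnd ℂ) (w (y - x))
      = (((d:ℝ)⁻¹ : ℝ):ℂ) * ee N (k₀ * x) * ((ρ (-x) : ℝ):ℂ) := by
    have e4 : ∀ y : ZMod N, w y * (starRingEnd ℂ) (w (y - x))
        = ((if y ∈ A ∧ y - x ∈ A then (1:ℝ) else 0 : ℝ) : ℂ)
            * ((((d:ℝ)⁻¹:ℝ):ℂ) * ee N (k₀ * x)) := by
      intro y
      rw [hwif y, hwif (y - x)]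
      by_cases h1 : y ∈ A
      · by_cases h2 : y - x ∈ A
        · rw [if_pos h1, if_pos h2, if_pos (⟨h1, h2⟩ : y ∈ A ∧ y - x ∈ A),
            Complex.ofReal_one, one_mul]
          calc z₀ * ee N (k₀ * y) * (starRingEnd ℂ) (z₀ * ee N (k₀ * (y - x)))
              = (z₀ * (starRingEnd ℂ) z₀) * (ee N (k₀ * y) * ee N (-(k₀ * (y - x)))) := by
                rw [map_mul (starRingEnd ℂ) z₀ (ee N (k₀ * (y - x))), ee_conj]; ring
            _ = ((Complex.normSq z₀ : ℝ) : ℂ) * ee N (k₀ * y + -(k₀ * (y - x))) := by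
                rw [Complex.mul_conj, ee_mul_ee]
            _ = (((d:ℝ)⁻¹ : ℝ) : ℂ) * ee N (k₀ * x) := by
                rw [hz, show k₀ * y + -(k₀ * (y - x)) = k₀ * x from by ring]
        · rw [if_pos h1, if_neg h2]
          simp [h1, h2]
      · rw [if_neg h1]
        simp [h1]
    simp_rw [e4]
    rw [← Finset.sum_mul]
    have : (∑ y : ZMod N, ((if y ∈ A ∧ y - x ∈ A then (1:ℝ) else 0 : ℝ):ℂ))
        = ((ρ (-x):ℝ):ℂ) := by
      rw [← Complex.ofReal_sum, hcount]
    rw [this]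
    ring
  have habsg : ‖∑ y : ZMod N, w y * (starRingEnd ℂ) (w (y - x))‖
      = ρ (-x) * (d:ℝ)⁻¹ := by
    rw [hgval, norm_mul, norm_mul, ee_abs, Complex.norm_real, Complex.norm_real,
      Real.norm_of_nonneg (inv_nonneg.mpr (le_of_lt hdR) : (0:ℝ) ≤ (d:ℝ)⁻¹), Real.norm_of_nonneg (hρnn (-x))]
    ring
  have hRHS : ∑ y : ZMod N, ‖w y‖^2 * ‖w (y - x)‖^2
      = ρ (-x) * ((d:ℝ)⁻¹ * (d:ℝ)⁻¹) := by
    have e5 : ∀ y : ZMod N, ‖w y‖^2 * ‖w (y - x)‖^2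
        = (if y ∈ A ∧ y - x ∈ A then (1:ℝ) else 0) * ((d:ℝ)⁻¹ * (d:ℝ)⁻¹) := by
      intro y
      rw [Complex.sq_norm, Complex.sq_norm, hwif y, hwif (y - x)]
      by_cases h1 : y ∈ A
      · by_cases h2 : y - x ∈ A
        · rw [if_pos h1, if_pos h2, if_pos (⟨h1, h2⟩ : y ∈ A ∧ y - x ∈ A), one_mul,
            Complex.normSq_mul, Complex.normSq_mul, ee_normSq, ee_normSq, hz]
          ring
        · rw [if_pos h1, if_neg h2]
          simp [h1, h2]
      · rw [if_neg h1]
        simp [h1]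
    simp_rw [e5]
    rw [← Finset.sum_mul, hcount]
  rw [hsuppA]
  rcases hρdich (-x) with hcase | hcase
  · constructor
    · rw [habsg, hRHS, hcase]
      simp
    · left
      rw [habsg, hcase]
      simp
  · constructor
    · rw [habsg, hRHS, hcase]
      field_simp
    · right
      rw [habsg, hcase]
      field_simp
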